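/- Let ω = exp(2π√−1/3). There exists a homogeneous polynomial P of degree 36 in four variables with complex coefficients such that for all complex numbers β0, β1, β2, β3, the value P(β0^3, β1^3, β2^3, β3^3) equals the product over all i1, i2, i3 ∈ {0, 1, 2} of (β0^4 + ω^{i1}·β1^4 + ω^{i2}·β2^4 + ω^{i3}·β3^4). -/

import Mathlib

noncomputable def ω : ℂ := Complex.exp (2 * Real.pi * Complex.I / 3)

open MvPolynomial

lemma hω3 : ω ^ 3 = 1 := by
  rw [ω, ← Complex.exp_nat_mul]
  have h : ((3 : ℕ) : ℂ) * (2 * Real.pi * Complex.I / 3) = 2 * Real.pi * Complex.I := by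
    push_cast; ring
  rw [h, Complex.exp_two_pi_mul_I]

lemma ω4 : ω ^ 4 = ω := by
  rw [show (4 : ℕ) = 3 + 1 from rfl, pow_add, hω3, one_mul, pow_one]

lemma hπI : (2 : ℂ) * Real.pi * Complex.I ≠ 0 := by
  simp [Real.pi_ne_zero, Complex.I_ne_zero, Complex.ofReal_ne_zero]

lemma hωdvd (n : ℕ) (h : ω ^ n = 1) : 3 ∣ n := by
  rw [ω, ← Complex.exp_nat_mul, Complex.exp_eq_one_iff] at h
  obtain ⟨m, hm⟩ := h
  have key : ((n : ℂ) - 3 * m) * (2 * Real.pi * Complex.I) = 0 := by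
    linear_combination 3 * hm
  have h3 : (n : ℂ) = 3 * m := by
    rcases mul_eq_zero.mp key with h' | h'
    · linear_combination h'
    · exact absurd h' hπI
  have hz : (n : ℤ) = 3 * m := by exact_mod_cast h3
  have h4 : (3 : ℤ) ∣ (n : ℤ) := ⟨m, hz⟩
  exact_mod_cast h4

/-- The big product polynomial of degree 108. -/
noncomputable def Qp : MvPolynomial (Fin 4) ℂ :=
  ∏ i1 : Fin 3, ∏ i2 : Fin 3, ∏ i3 : Fin 3,
    (X 0 ^ 4 + C (ω ^ (i1 : ℕ)) * X 1 ^ 4 + C (ω ^ (i2 : ℕ)) * X 2 ^ 4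
      + C (ω ^ (i3 : ℕ)) * X 3 ^ 4)

lemma Qp_homog : Qp.IsHomogeneous 108 := by
  have h : (108 : ℕ) = ∑ _i1 : Fin 3, ∑ _i2 : Fin 3, ∑ _i3 : Fin 3, 4 := by simp
  rw [Qp, h]
  apply IsHomogeneous.prod
  intro i1 _
  apply IsHomogeneous.prod
  intro i2 _
  apply IsHomogeneous.prod
  intro i3 _
  refine (((isHomogeneous_X_pow 0 4).add ?_).add ?_).add ?_ <;>
    exact isHomogeneous_C_mul_X_pow _ _ _

lemma degree_eq_sum (d : Fin 4 →₀ ℕ) : d.degree = ∑ k, d k :=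
  Finset.sum_subset (Finset.subset_univ _)
    (fun _ _ hx => Finsupp.notMem_support_iff.mp hx)

lemma sum_eq_of_support (d : Fin 4 →₀ ℕ) (hd : d ∈ Qp.support) : ∑ k, d k = 108 := by
  have h := Qp_homog (mem_support_iff.mp hd)
  rw [Finsupp.weight_apply, Finsupp.sum_fintype] at h
  · simpa using h
  · simp

lemma aeval_scale_monomial (c : Fin 4 → ℂ) (d' : Fin 4 →₀ ℕ) (a : ℂ) :
    aeval (fun k => (C (c k) * X k : MvPolynomial (Fin 4) ℂ)) (monomial d' a)
      = monomial d' (a * ∏ k, c k ^ d' k) := by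
  rw [aeval_monomial, monomial_eq,
    show (algebraMap ℂ (MvPolynomial (Fin 4) ℂ)) a = C a from rfl,
    Finsupp.prod_pow d' (fun k => (C (c k) * X k : MvPolynomial (Fin 4) ℂ)),
    Finsupp.prod_pow d' (fun k => (X k : MvPolynomial (Fin 4) ℂ))]
  simp only [mul_pow, ← C_pow]
  rw [Finset.prod_mul_distrib, ← map_prod, C_mul]
  ring

/-- Coefficients of a variable-scaled polynomial. -/
lemma coeff_scale (c : Fin 4 → ℂ) (Q : MvPolynomial (Fin 4) ℂ) (d : (Fin 4) →₀ ℕ) :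
    coeff d (aeval (fun k => (C (c k) * X k : MvPolynomial (Fin 4) ℂ)) Q)
      = (∏ k, c k ^ d k) * coeff d Q := by
  induction Q using MvPolynomial.induction_on' with
  | monomial d' a =>
    rw [aeval_scale_monomial, coeff_monomial, coeff_monomial]
    split_ifs with h
    · subst h; ring
    · ring
  | add p q hp hq =>
    rw [map_add, coeff_add, hp, hq, coeff_add, mul_add]

section Shift

variable {M : Type*} [CommMonoid M]

lemma prod3_shift (h : ℕ → M) (hper : h 3 = h 0) :
    ∏ i : Fin 3, h ((i : ℕ) + 1) = ∏ i : Fin 3, h (i : ℕ) := by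
  rw [Fin.prod_univ_three, Fin.prod_univ_three]
  simp only [Fin.val_zero, Fin.val_one, Fin.val_two, zero_add]
  rw [show (2 : ℕ) + 1 = 3 from rfl, hper]
  exact (mul_rotate (h 0) (h 1) (h 2)).symm

end Shift

/-- scaling a single variable by ω. -/
noncomputable def cf (j : Fin 4) : Fin 4 → ℂ := fun k => if k = j then ω else 1

lemma aeval_cf_factor (j : Fin 4) (a b c : ℂ) :
    aeval (fun k => (C (cf j k) * X k : MvPolynomial (Fin 4) ℂ))
      (X 0 ^ 4 + C a * X 1 ^ 4 + C b * X 2 ^ 4 + C c * X 3 ^ 4) =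
    C (cf j 0 ^ 4) * X 0 ^ 4 + C (a * cf j 1 ^ 4) * X 1 ^ 4
      + C (b * cf j 2 ^ 4) * X 2 ^ 4 + C (c * cf j 3 ^ 4) * X 3 ^ 4 := by
  simp only [map_add, map_mul, map_pow, aeval_X, aeval_C, algebraMap_eq, mul_pow, map_pow]
  ring

lemma scale_invar1 :
    aeval (fun k => (C (cf 1 k) * X k : MvPolynomial (Fin 4) ℂ)) Qp = Qp := by
  rw [Qp, map_prod]
  have hfac : ∀ i1 i2 i3 : Fin 3,
      aeval (fun k => (C (cf 1 k) * X k : MvPolynomial (Fin 4) ℂ))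
        (X 0 ^ 4 + C (ω ^ (i1 : ℕ)) * X 1 ^ 4 + C (ω ^ (i2 : ℕ)) * X 2 ^ 4
          + C (ω ^ (i3 : ℕ)) * X 3 ^ 4)
      = X 0 ^ 4 + C (ω ^ ((i1 : ℕ) + 1)) * X 1 ^ 4 + C (ω ^ (i2 : ℕ)) * X 2 ^ 4
          + C (ω ^ (i3 : ℕ)) * X 3 ^ 4 := by
    intro i1 i2 i3
    rw [aeval_cf_factor]
    have e0 : cf 1 0 = 1 := rfl
    have e1 : cf 1 1 = ω := rfl
    have e2 : cf 1 2 = 1 := rfl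
    have e3 : cf 1 3 = 1 := rfl
    simp only [e0, e1, e2, e3, one_pow, C_1, one_mul, mul_one, ω4, ← pow_succ]
  simp only [map_prod, hfac]
  exact prod3_shift (fun n => ∏ i2 : Fin 3, ∏ i3 : Fin 3,
      (X 0 ^ 4 + C (ω ^ n) * X 1 ^ 4 + C (ω ^ (i2 : ℕ)) * X 2 ^ 4
        + C (ω ^ (i3 : ℕ)) * X 3 ^ 4)) (by simp [hω3])

lemma scale_invar2 :
    aeval (fun k => (C (cf 2 k) * X k : MvPolynomial (Fin 4) ℂ)) Qp = Qp := by
  rw [Qp, map_prod]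
  have hfac : ∀ i1 i2 i3 : Fin 3,
      aeval (fun k => (C (cf 2 k) * X k : MvPolynomial (Fin 4) ℂ))
        (X 0 ^ 4 + C (ω ^ (i1 : ℕ)) * X 1 ^ 4 + C (ω ^ (i2 : ℕ)) * X 2 ^ 4
          + C (ω ^ (i3 : ℕ)) * X 3 ^ 4)
      = X 0 ^ 4 + C (ω ^ (i1 : ℕ)) * X 1 ^ 4 + C (ω ^ ((i2 : ℕ) + 1)) * X 2 ^ 4
          + C (ω ^ (i3 : ℕ)) * X 3 ^ 4 := by
    intro i1 i2 i3
    rw [aeval_cf_factor]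
    have e0 : cf 2 0 = 1 := rfl
    have e1 : cf 2 1 = 1 := rfl
    have e2 : cf 2 2 = ω := rfl
    have e3 : cf 2 3 = 1 := rfl
    simp only [e0, e1, e2, e3, one_pow, C_1, one_mul, mul_one, ω4, ← pow_succ]
  simp only [map_prod, hfac]
  refine Finset.prod_congr rfl fun i1 _ => ?_
  exact prod3_shift (fun n => ∏ i3 : Fin 3,
      (X 0 ^ 4 + C (ω ^ (i1 : ℕ)) * X 1 ^ 4 + C (ω ^ n) * X 2 ^ 4
        + C (ω ^ (i3 : ℕ)) * X 3 ^ 4)) (by simp [hω3])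

lemma scale_invar3 :
    aeval (fun k => (C (cf 3 k) * X k : MvPolynomial (Fin 4) ℂ)) Qp = Qp := by
  rw [Qp, map_prod]
  have hfac : ∀ i1 i2 i3 : Fin 3,
      aeval (fun k => (C (cf 3 k) * X k : MvPolynomial (Fin 4) ℂ))
        (X 0 ^ 4 + C (ω ^ (i1 : ℕ)) * X 1 ^ 4 + C (ω ^ (i2 : ℕ)) * X 2 ^ 4
          + C (ω ^ (i3 : ℕ)) * X 3 ^ 4)
      = X 0 ^ 4 + C (ω ^ (i1 : ℕ)) * X 1 ^ 4 + C (ω ^ (i2 : ℕ)) * X 2 ^ 4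
          + C (ω ^ ((i3 : ℕ) + 1)) * X 3 ^ 4 := by
    intro i1 i2 i3
    rw [aeval_cf_factor]
    have e0 : cf 3 0 = 1 := rfl
    have e1 : cf 3 1 = 1 := rfl
    have e2 : cf 3 2 = 1 := rfl
    have e3 : cf 3 3 = ω := rfl
    simp only [e0, e1, e2, e3, one_pow, C_1, one_mul, mul_one, ω4, ← pow_succ]
  simp only [map_prod, hfac]
  refine Finset.prod_congr rfl fun i1 _ => ?_
  refine Finset.prod_congr rfl fun i2 _ => ?_
  exact prod3_shift (fun n =>
      (X 0 ^ 4 + C (ω ^ (i1 : ℕ)) * X 1 ^ 4 + C (ω ^ (i2 : ℕ)) * X 2 ^ 4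
        + C (ω ^ n) * X 3 ^ 4)) (by simp [hω3])

lemma dvd_of_invar (d : Fin 4 →₀ ℕ) (hc : coeff d Qp ≠ 0) (j : Fin 4)
    (hinv : aeval (fun k => (C (cf j k) * X k : MvPolynomial (Fin 4) ℂ)) Qp = Qp) :
    3 ∣ d j := by
  have hcoeff : (∏ k, cf j k ^ d k) * coeff d Qp = coeff d Qp := by
    rw [← coeff_scale, hinv]
  have hone : (∏ k, cf j k ^ d k) = 1 :=
    mul_right_cancel₀ hc (hcoeff.trans (one_mul _).symm)
  have hval : (∏ k, cf j k ^ d k) = ω ^ d j := by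
    have h1 : ∀ k, cf j k ^ d k = if k = j then ω ^ d k else 1 := by
      intro k
      by_cases h : k = j <;> simp [cf, h]
    simp only [h1]
    rw [Finset.prod_ite_eq' Finset.univ j (fun k => ω ^ d k)]
    simp
  exact hωdvd _ (hval ▸ hone)

lemma dvd_of_support (d : Fin 4 →₀ ℕ) (hd : d ∈ Qp.support) : ∀ k, 3 ∣ d k := by
  have hc : coeff d Qp ≠ 0 := mem_support_iff.mp hd
  have h1 := dvd_of_invar d hc 1 scale_invar1
  have h2 := dvd_of_invar d hc 2 scale_invar2
  have h3 := dvd_of_invar d hc 3 scale_invar3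
  have hsum : ∑ k, d k = 108 := sum_eq_of_support d hd
  rw [Fin.sum_univ_four] at hsum
  intro k
  by_cases hk : k = 0
  · subst hk
    omega
  · fin_cases k
    · exact absurd rfl hk
    · exact h1
    · exact h2
    · exact h3

theorem exists_homogeneous_degree36_defining_dual :
    ∃ P : MvPolynomial (Fin 4) ℂ, P.IsHomogeneous 36 ∧
      ∀ β0 β1 β2 β3 : ℂ,
        MvPolynomial.eval (![β0 ^ 3, β1 ^ 3, β2 ^ 3, β3 ^ 3]) P =
          ∏ i1 : Fin 3, ∏ i2 : Fin 3, ∏ i3 : Fin 3,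
            (β0 ^ 4 + ω ^ (i1 : ℕ) * β1 ^ 4 + ω ^ (i2 : ℕ) * β2 ^ 4 + ω ^ (i3 : ℕ) * β3 ^ 4) := by
  classical
  refine ⟨∑ d ∈ Qp.support, monomial (Finsupp.mapRange (· / 3) (Nat.zero_div 3) d) (coeff d Qp),
      ?_, ?_⟩
  · apply IsHomogeneous.sum
    intro d hd
    apply isHomogeneous_monomial
    have hdvd := dvd_of_support d hd
    have hsum : ∑ k, d k = 108 := sum_eq_of_support d hd
    rw [degree_eq_sum]
    have hmk : ∀ k, (Finsupp.mapRange (· / 3) (Nat.zero_div 3) d) k = d k / 3 := fun k =>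
      Finsupp.mapRange_apply
    simp only [hmk]
    have h3g : 3 * (∑ k, d k / 3) = ∑ k, d k := by
      rw [Finset.mul_sum]
      exact Finset.sum_congr rfl fun k _ => Nat.mul_div_cancel' (hdvd k)
    omega
  · intro β0 β1 β2 β3
    set β : Fin 4 → ℂ := ![β0, β1, β2, β3] with hβ
    have hβ3 : ![β0 ^ 3, β1 ^ 3, β2 ^ 3, β3 ^ 3] = fun k => β k ^ 3 := by
      funext k; fin_cases k <;> simp [hβ]
    have hRHS : (∏ i1 : Fin 3, ∏ i2 : Fin 3, ∏ i3 : Fin 3,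
        (β0 ^ 4 + ω ^ (i1 : ℕ) * β1 ^ 4 + ω ^ (i2 : ℕ) * β2 ^ 4 + ω ^ (i3 : ℕ) * β3 ^ 4))
        = eval β Qp := by
      rw [Qp, map_prod]
      refine Finset.prod_congr rfl fun i1 _ => ?_
      rw [map_prod]
      refine Finset.prod_congr rfl fun i2 _ => ?_
      rw [map_prod]
      refine Finset.prod_congr rfl fun i3 _ => ?_
      simp [hβ]
    rw [hRHS, hβ3, map_sum, eval_eq']
    refine Finset.sum_congr rfl fun d hd => ?_
    rw [eval_monomial]
    have hdvd := dvd_of_support d hd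
    rw [Finsupp.prod_pow]
    congr 1
    refine Finset.prod_congr rfl fun k _ => ?_
    rw [Finsupp.mapRange_apply, ← pow_mul, Nat.mul_div_cancel' (hdvd k)]
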